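/- Consider the composition operator C_φ on the Hardy space H²(𝔻) induced by φ(z) = ζ z for a fixed ζ in the closed unit disc. Its Berezin transform at λ ∈ 𝔻 is C̃_φ(λ) = (1 − |λ|²)/(1 − ζ|λ|²), and the Berezin range {C̃_φ(λ) : λ ∈ 𝔻} is convex if and only if ζ ∈ [−1, 1]. -/

import Mathlib

theorem stmt_14 (ζ : ℂ) (hζ : ‖ζ‖ ≤ 1) :
    Convex ℝ ((fun l : ℂ => (1 - (‖l‖ : ℂ) ^ 2) / (1 - ζ * (‖l‖ : ℂ) ^ 2)) ''
        Metric.ball (0 : ℂ) 1) ↔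
      ∃ t : ℝ, -1 ≤ t ∧ t ≤ 1 ∧ ζ = (t : ℂ) := by
  have hden : ∀ s : ℝ, 0 ≤ s → s < 1 → (1:ℂ) - ζ * s ≠ 0 := by
    intro s h0 h1 h
    have h2 : ζ * (s:ℂ) = 1 := by linear_combination -h
    have h3 := congrArg norm h2
    rw [norm_mul, Complex.norm_real, Real.norm_eq_abs, abs_of_nonneg h0, norm_one] at h3
    nlinarith [norm_nonneg ζ]
  constructor
  · intro hC
    suffices him : ζ.im = 0 by
      refine ⟨ζ.re, ?_, ?_, ?_⟩
      · have h : ‖ζ‖ = |ζ.re| := by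
          rw [Complex.norm_def, Complex.normSq_apply, him]
          simp [Real.sqrt_mul_self_eq_abs]
        linarith [(abs_le.mp (h ▸ hζ)).1]
      · have h : ‖ζ‖ = |ζ.re| := by
          rw [Complex.norm_def, Complex.normSq_apply, him]
          simp [Real.sqrt_mul_self_eq_abs]
        linarith [(abs_le.mp (h ▸ hζ)).2]
      · exact (Complex.ext (by simp) (by simp [him])).symm
    by_contra hb
    have h4 : (4:ℂ) - ζ ≠ 0 := by
      intro h
      have h2 : ζ = 4 := by linear_combination -h
      rw [h2] at hζ; norm_num at hζ
    have h1mem : (1:ℂ) ∈ ((fun l : ℂ => (1 - (‖l‖ : ℂ) ^ 2) / (1 - ζ * (‖l‖ : ℂ) ^ 2)) ''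
        Metric.ball (0 : ℂ) 1) := ⟨0, by simp, by simp⟩
    have hwmem : (3 / (4 - ζ) : ℂ) ∈ ((fun l : ℂ => (1 - (‖l‖ : ℂ) ^ 2) / (1 - ζ * (‖l‖ : ℂ) ^ 2)) ''
        Metric.ball (0 : ℂ) 1) := by
      refine ⟨1/2, by norm_num, ?_⟩
      have hn : ‖(1/2 : ℂ)‖ = 1/2 := by norm_num
      have hd := hden (1/4) (by norm_num) (by norm_num)
      simp only [hn]
      rw [div_eq_div_iff (by push_cast at hd ⊢; convert hd using 2; norm_num) h4]
      push_cast; ring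
    have hmid := hC h1mem hwmem (by norm_num : (0:ℝ) ≤ 1/2) (by norm_num : (0:ℝ) ≤ 1/2) (by norm_num)
    obtain ⟨l, hl, heq⟩ := hmid
    rw [Metric.mem_ball, dist_zero_right] at hl
    set s : ℝ := ‖l‖^2 with hs
    have hs0 : 0 ≤ s := sq_nonneg _
    have hs1 : s < 1 := by nlinarith [norm_nonneg l]
    have hds := hden s hs0 hs1
    have hcast : ((‖l‖:ℂ))^2 = (s:ℂ) := by norm_cast
    simp only [hcast] at heq
    simp only [Complex.real_smul, Complex.ofReal_div, Complex.ofReal_one, Complex.ofReal_ofNat] at heq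
    rw [div_eq_iff hds] at heq
    have key : (1 - (s:ℂ)) * (2 * (4 - ζ)) = (7 - ζ) * (1 - ζ * s) := by
      field_simp at heq
      linear_combination heq
    have him := congrArg Complex.im key
    have hre := congrArg Complex.re key
    simp only [Complex.mul_im, Complex.mul_re, Complex.sub_im, Complex.sub_re,
      Complex.ofReal_re, Complex.ofReal_im, Complex.one_im, Complex.one_re,
      Complex.im_ofNat, Complex.re_ofNat] at him hre
    have h3 : s * (9 - 2*ζ.re) = 1 := by
      have h5 : ζ.im * (s * (9 - 2*ζ.re) - 1) = 0 := by linear_combination him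
      rcases mul_eq_zero.mp h5 with h | h
      · exact absurd h hb
      · linarith
    have hb2 : 0 < ζ.im ^ 2 := by positivity
    have hfinal : (ζ.re - 1)^2 + ζ.im^2 = 0 := by
      linear_combination (9 - 2*ζ.re) * hre + (8 - 9*ζ.re + ζ.re^2 - ζ.im^2) * h3
    nlinarith [sq_nonneg (ζ.re - 1)]
  · rintro ⟨t, ht1, ht2, rfl⟩
    rcases eq_or_lt_of_le ht2 with h1 | h1
    · -- t = 1 : the image is {1}
      subst h1
      have himg : ((fun l : ℂ => (1 - (‖l‖ : ℂ) ^ 2) / (1 - ((1:ℝ):ℂ) * (‖l‖ : ℂ) ^ 2)) ''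
          Metric.ball (0 : ℂ) 1) = {(1:ℂ)} := by
        apply Set.Subset.antisymm
        · rintro _ ⟨l, hl, rfl⟩
          rw [Metric.mem_ball, dist_zero_right] at hl
          have hs0 : (0:ℝ) ≤ ‖l‖^2 := sq_nonneg _
          have hs1 : ‖l‖^2 < 1 := by nlinarith [norm_nonneg l]
          have hne : (1:ℂ) - (‖l‖:ℂ)^2 ≠ 0 := by
            have h5 := hden (‖l‖^2) hs0 hs1
            push_cast at h5 ⊢
            simpa using h5
          simp only [Set.mem_singleton_iff]
          push_cast
          rw [one_mul, div_self hne]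
        · rintro z hz
          rw [Set.mem_singleton_iff] at hz
          exact ⟨0, by simp, by simp [hz]⟩
      rw [himg]
      exact convex_singleton 1
    · -- t < 1 : the image is the interval (0, 1] on the real axis
      have himg : ((fun l : ℂ => (1 - (‖l‖ : ℂ) ^ 2) / (1 - (t:ℂ) * (‖l‖ : ℂ) ^ 2)) ''
          Metric.ball (0 : ℂ) 1) = Complex.ofReal '' Set.Ioc 0 1 := by
        apply Set.Subset.antisymm
        · rintro _ ⟨l, hl, rfl⟩
          rw [Metric.mem_ball, dist_zero_right] at hl
          set s : ℝ := ‖l‖^2 with hs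
          have hs0 : (0:ℝ) ≤ s := sq_nonneg _
          have hs1 : s < 1 := by nlinarith [norm_nonneg l]
          have hd : (0:ℝ) < 1 - t * s := by nlinarith
          refine ⟨(1 - s)/(1 - t*s), ⟨div_pos (by linarith) hd, ?_⟩, ?_⟩
          · rw [div_le_one hd]; nlinarith
          · rw [hs]
            push_cast
            ring
        · rintro _ ⟨y, ⟨hy0, hy1⟩, rfl⟩
          have hyt : (0:ℝ) < 1 - y * t := by nlinarith
          set r : ℝ := (1 - y)/(1 - y*t) with hr
          have hr0 : (0:ℝ) ≤ r := div_nonneg (by linarith) (le_of_lt hyt)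
          have hr1 : r < 1 := by
            rw [div_lt_one hyt]; nlinarith
          refine ⟨(Real.sqrt r : ℂ), ?_, ?_⟩
          · rw [Metric.mem_ball, dist_zero_right, Complex.norm_real, Real.norm_eq_abs,
              abs_of_nonneg (Real.sqrt_nonneg r)]
            calc Real.sqrt r < Real.sqrt 1 := Real.sqrt_lt_sqrt hr0 hr1
              _ = 1 := Real.sqrt_one
          · have hns : ‖((Real.sqrt r : ℝ) : ℂ)‖ = Real.sqrt r := by
              rw [Complex.norm_real, Real.norm_eq_abs, abs_of_nonneg (Real.sqrt_nonneg r)]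
            have hsq : (Real.sqrt r)^2 = r := Real.sq_sqrt hr0
            have hdr : (0:ℝ) < 1 - t * r := by
              have : t * r < 1 := by nlinarith [abs_le.mp (abs_le.mpr ⟨ht1, ht2⟩)]
              linarith
            have hreal : 1 - r = y * (1 - t * r) := by
              rw [hr]; field_simp; ring
            simp only [hns]
            have hcast : ((Real.sqrt r : ℝ):ℂ)^2 = (r:ℂ) := by
              norm_cast
            rw [hcast]
            have hne : (1:ℂ) - (t:ℂ) * (r:ℂ) ≠ 0 := by
              have h5 : ((1 - t*r : ℝ):ℂ) ≠ 0 := Complex.ofReal_ne_zero.mpr (ne_of_gt hdr)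
              push_cast at h5
              convert h5 using 1
            rw [div_eq_iff hne]
            exact_mod_cast hreal
      rw [himg]
      exact (convex_Ioc (0:ℝ) 1).is_linear_image
        ⟨fun x y => by push_cast; ring, fun c x => by
          simp only [smul_eq_mul, Complex.real_smul]; push_cast; ring⟩
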